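/- arXiv:2405.07811 — 4 statements merged into one kernel-verified Lean document; each statement's English description precedes it below -/
import Mathlib

section
/- Let M ≥ 1 and N = 2M. Define the vector z ∈ ℝ^{N+1} (indices 0,…,N) by z_{2k} = 0 for 0 ≤ k ≤ M and z_{2k+1} = −√( (2M+1)! / (2k+1)! ) / ( 4^{M−k} · (M−k)! ) for 0 ≤ k ≤ M−1. Then z solves the linear system A^N z = g^N, where g^N ∈ ℝ^{N+1} has entries g_p = a_{p, 2M+1}; that is, for every p with 0 ≤ p ≤ 2M, ∑_{j=0}^{2M} a_{p,j} · z_j = a_{p, 2M+1}. -/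
open Real MeasureTheory Matrix Filter

/-- Physicists' Hermite polynomials: H_0 = 1, H_1 = 2x, H_{n+1} = 2x H_n - 2n H_{n-1}. -/
noncomputable def hermiteH : ℕ → ℝ → ℝ
  | 0, _ => 1
  | 1, x => 2 * x
  | (n + 2), x => 2 * x * hermiteH (n + 1) x - 2 * (n + 1) * hermiteH n x

/-- Asymmetric Hermite basis function ψ_m. -/
noncomputable def psi (T : ℝ) (m : ℕ) (v : ℝ) : ℝ :=
  Real.exp (-v ^ 2 / T) * T ^ (-(1 : ℝ) / 2) *
    ((2 : ℝ) ^ m * (Nat.factorial m : ℝ) * Real.sqrt π) ^ (-(1 : ℝ) / 2) *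
    hermiteH m (v / Real.sqrt T)

/-- Gram coefficient a_{m,n} = ∫ ψ_m ψ_n. -/
noncomputable def gramA (T : ℝ) (m n : ℕ) : ℝ := ∫ v : ℝ, psi T m v * psi T n v

lemma hermiteH_zero (x : ℝ) : hermiteH 0 x = 1 := rfl
lemma hermiteH_one (x : ℝ) : hermiteH 1 x = 2 * x := rfl
lemma hermiteH_add_two (n : ℕ) (x : ℝ) :
    hermiteH (n + 2) x = 2 * x * hermiteH (n + 1) x - 2 * (n + 1) * hermiteH n x := rfl

/-- recurrence valid for all n with nat subtraction -/
lemma hermiteH_succ_eq (n : ℕ) (x : ℝ) :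
    hermiteH (n + 1) x = 2 * x * hermiteH n x - 2 * n * hermiteH (n - 1) x := by
  cases n with
  | zero => simp [hermiteH_zero, hermiteH_one]
  | succ m => rw [hermiteH_add_two]; push_cast; simp

lemma two_mul_x_hermite (n : ℕ) (x : ℝ) :
    2 * x * hermiteH n x = hermiteH (n + 1) x + 2 * n * hermiteH (n - 1) x := by
  rw [hermiteH_succ_eq]; ring

/-- polynomial representation -/
noncomputable def HP : ℕ → Polynomial ℝ
  | 0 => 1
  | 1 => Polynomial.C 2 * Polynomial.X
  | (n + 2) => Polynomial.C 2 * Polynomial.X * HP (n + 1) - Polynomial.C (2 * ((n:ℝ) + 1)) * HP n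

lemma HP_eval (n : ℕ) (x : ℝ) : (HP n).eval x = hermiteH n x := by
  induction n using Nat.strong_induction_on with
  | _ n ih =>
    match n with
    | 0 => simp [HP, hermiteH_zero]
    | 1 => simp [HP, hermiteH_one]
    | (m + 2) =>
      simp only [HP, hermiteH_add_two, Polynomial.eval_sub, Polynomial.eval_mul,
        Polynomial.eval_C, Polynomial.eval_X, ih (m+1) (by omega), ih m (by omega)]

lemma hermiteH_hasDerivAt (n : ℕ) (x : ℝ) :
    HasDerivAt (fun y => hermiteH n y) (2 * n * hermiteH (n - 1) x) x := by
  induction n using Nat.strong_induction_on generalizing x with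
  | _ n ih =>
    match n with
    | 0 => simpa [hermiteH_zero] using hasDerivAt_const x (1:ℝ)
    | 1 =>
      have h : HasDerivAt (fun y : ℝ => 2 * y) 2 x := by
        simpa using (hasDerivAt_id x).const_mul (2:ℝ)
      simpa [hermiteH_zero, hermiteH_one] using h
    | (m + 2) =>
      have h1 : HasDerivAt (fun y : ℝ => 2 * y * hermiteH (m+1) y)
          (2 * hermiteH (m+1) x + 2 * x * (2 * (m+1) * hermiteH m x)) x := by
        have ha : HasDerivAt (fun y : ℝ => 2 * y) 2 x := by
          simpa using (hasDerivAt_id x).const_mul (2:ℝ)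
        have hb := ih (m+1) (by omega) x
        have hb' : HasDerivAt (fun y => hermiteH (m+1) y) (2 * ((m:ℝ)+1) * hermiteH m x) x := by
          convert hb using 2 <;> push_cast [Nat.add_sub_cancel] <;> ring
        exact ha.mul hb'
      have h2 : HasDerivAt (fun y : ℝ => 2 * ((m:ℝ)+1) * hermiteH m y)
          (2 * ((m:ℝ)+1) * (2 * m * hermiteH (m-1) x)) x := by
        have := (ih m (by omega) x).const_mul (2 * ((m:ℝ)+1))
        exact this
      have h := h1.sub h2
      have heq : (fun y => hermiteH (m + 2) y) =
          fun y => 2 * y * hermiteH (m+1) y - 2 * ((m:ℝ)+1) * hermiteH m y := by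
        funext y; rw [hermiteH_add_two]
      rw [heq]
      refine h.congr_deriv ?_
      have key : 2 * x * hermiteH m x - 2 * m * hermiteH (m-1) x = hermiteH (m+1) x :=
        (hermiteH_succ_eq m x).symm
      push_cast [Nat.add_sub_cancel]
      nlinarith [key]

/-- Gaussian-Hermite function and its derivative -/
lemma gaussHermite_hasDerivAt (n : ℕ) (x : ℝ) :
    HasDerivAt (fun y => Real.exp (-y^2) * hermiteH n y)
      (-(Real.exp (-x^2) * hermiteH (n+1) x)) x := by
  have hg : HasDerivAt (fun y : ℝ => Real.exp (-y^2)) (Real.exp (-x^2) * (-(2*x))) x := by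
    have h1 : HasDerivAt (fun y : ℝ => -y^2) (-(2*x)) x := by
      exact ((hasDerivAt_pow 2 x).neg).congr_deriv (by norm_num)
    exact h1.exp
  have h := hg.mul (hermiteH_hasDerivAt n x)
  refine h.congr_deriv ?_
  rw [hermiteH_succ_eq n x]
  ring

lemma HP_natDegree_le (n : ℕ) : (HP n).natDegree ≤ n := by
  induction n using Nat.strong_induction_on with
  | _ n ih =>
    match n with
    | 0 => simp [HP]
    | 1 => simp [HP]
    | (m + 2) =>
      show (Polynomial.C 2 * Polynomial.X * HP (m+1)
        - Polynomial.C (2 * ((m:ℝ)+1)) * HP m).natDegree ≤ m + 2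
      refine le_trans (Polynomial.natDegree_sub_le _ _) ?_
      refine max_le ?_ ?_
      · refine le_trans (Polynomial.natDegree_mul_le) ?_
        have h1 : (Polynomial.C (2:ℝ) * Polynomial.X).natDegree ≤ 1 := by
          refine le_trans (Polynomial.natDegree_mul_le) ?_
          simp
        have := ih (m+1) (by omega)
        omega
      · refine le_trans (Polynomial.natDegree_mul_le) ?_
        have := ih m (by omega)
        simp only [Polynomial.natDegree_C]
        omega

lemma integrable_pow_gauss {b : ℝ} (hb : 0 < b) (n : ℕ) :
    Integrable fun x : ℝ => x ^ n * Real.exp (-b * x ^ 2) := by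
  refine Integrable.mono' ((integrable_exp_neg_mul_sq (half_pos hb)).const_mul
    ((n.factorial : ℝ) * Real.exp (1 / (2 * b)))) ?_ ?_
  · exact (Continuous.mul (continuous_pow n)
      ((continuous_const.mul (continuous_pow 2)).rexp)).aestronglyMeasurable
  · filter_upwards with x
    rw [norm_mul, norm_pow, Real.norm_eq_abs, Real.norm_eq_abs,
      abs_of_pos (Real.exp_pos _)]
    have h1 : |x| ^ n ≤ (n.factorial : ℝ) * Real.exp |x| := by
      have := Real.pow_div_factorial_le_exp (x := |x|) (abs_nonneg x) n
      have hf : (0:ℝ) < n.factorial := by positivity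
      calc |x| ^ n = (|x| ^ n / n.factorial) * n.factorial := by field_simp
        _ ≤ Real.exp |x| * n.factorial := by
            apply mul_le_mul_of_nonneg_right this hf.le
        _ = (n.factorial : ℝ) * Real.exp |x| := by ring
    calc |x| ^ n * Real.exp (-b * x ^ 2)
        ≤ (n.factorial : ℝ) * Real.exp |x| * Real.exp (-b * x ^ 2) := by
          apply mul_le_mul_of_nonneg_right h1 (Real.exp_pos _).le
      _ = (n.factorial : ℝ) * Real.exp (|x| - b * x ^ 2) := by
          rw [mul_assoc, ← Real.exp_add]; ring_nf
      _ ≤ (n.factorial : ℝ) * Real.exp (1 / (2*b) + (-(b/2) * x ^ 2)) := by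
          have hfact : (0:ℝ) ≤ n.factorial := by positivity
          apply mul_le_mul_of_nonneg_left _ hfact
          apply Real.exp_le_exp.mpr
          have h2 : 2 * b * |x| ≤ 1 + b ^ 2 * x ^ 2 := by
            nlinarith [sq_nonneg (b * |x| - 1), sq_abs x]
          have h3 : |x| ≤ 1 / (2 * b) + (b / 2) * x ^ 2 := by
            rw [← sub_nonneg]
            have h4 : 1 / (2*b) + (b/2)*x^2 - |x| = (1 + b^2*x^2 - 2*b*|x|) / (2*b) := by
              field_simp
            rw [h4]
            apply div_nonneg (by linarith) (by positivity)
          linarith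
      _ = (n.factorial : ℝ) * Real.exp (1 / (2*b)) * Real.exp (-(b/2) * x ^ 2) := by
          rw [Real.exp_add]; ring

lemma integrable_of_poly_gauss {b : ℝ} (hb : 0 < b) (P : Polynomial ℝ) (f : ℝ → ℝ)
    (hf : ∀ x, f x = P.eval x * Real.exp (-b * x ^ 2)) : Integrable f := by
  have : f = fun x => ∑ j ∈ Finset.range (P.natDegree + 1),
      P.coeff j * (x ^ j * Real.exp (-b * x ^ 2)) := by
    funext x
    rw [hf x, Polynomial.eval_eq_sum_range, Finset.sum_mul]
    exact Finset.sum_congr rfl fun j _ => by ring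
  rw [this]
  exact integrable_finset_sum _ fun j _ => (integrable_pow_gauss hb j).const_mul _

lemma ortho (n : ℕ) : ∀ j < n, ∫ x : ℝ, x ^ j * (Real.exp (-x ^ 2) * hermiteH n x) = 0 := by
  induction n with
  | zero => omega
  | succ n IH =>
    intro j hj
    have hu : ∀ x : ℝ, HasDerivAt (fun y : ℝ => y ^ j) ((j:ℝ) * x ^ (j-1)) x :=
      fun x => hasDerivAt_pow j x
    have hv : ∀ x : ℝ, HasDerivAt (fun y => Real.exp (-y^2) * hermiteH n y)
        (-(Real.exp (-x^2) * hermiteH (n+1) x)) x := gaussHermite_hasDerivAt n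
    have hint : ∀ Q : Polynomial ℝ, ∀ f : ℝ → ℝ,
        (∀ x, f x = Q.eval x * Real.exp (-x^2)) → Integrable f := by
      intro Q f h
      refine integrable_of_poly_gauss (b := 1) one_pos Q f ?_
      intro x; rw [h x]; norm_num
    have h1 : Integrable ((fun x : ℝ => x ^ j) *
        (fun x => -(Real.exp (-x^2) * hermiteH (n+1) x))) := by
      refine hint (-(Polynomial.X ^ j * HP (n+1))) _ fun x => ?_
      simp [HP_eval]; ring
    have h2 : Integrable ((fun x : ℝ => (j:ℝ) * x ^ (j-1)) *
        (fun x => Real.exp (-x^2) * hermiteH n x)) := by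
      refine hint (Polynomial.C (j:ℝ) * Polynomial.X ^ (j-1) * HP n) _ fun x => ?_
      simp [HP_eval]; ring
    have h3 : Integrable ((fun x : ℝ => x ^ j) *
        (fun x => Real.exp (-x^2) * hermiteH n x)) := by
      refine hint (Polynomial.X ^ j * HP n) _ fun x => ?_
      simp [HP_eval]; ring
    have ibp := integral_mul_deriv_eq_deriv_mul_of_integrable (fun x _ => hu x) (fun x _ => hv x) h1 h2 h3
    have lhs : ∫ x : ℝ, x ^ j * (-(Real.exp (-x^2) * hermiteH (n+1) x))
        = -∫ x : ℝ, x ^ j * (Real.exp (-x^2) * hermiteH (n+1) x) := by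
      rw [← integral_neg]; congr 1; funext x; ring
    rw [lhs] at ibp
    have key : ∫ x : ℝ, x ^ j * (Real.exp (-x^2) * hermiteH (n+1) x)
        = (j:ℝ) * ∫ x : ℝ, x ^ (j-1) * (Real.exp (-x^2) * hermiteH n x) := by
      have := neg_injective ibp
      rw [this, ← integral_const_mul]
      congr 1; funext x; ring
    rw [key]
    rcases Nat.eq_zero_or_pos j with hj0 | hj0
    · simp [hj0]
    · rw [IH (j-1) (by omega), mul_zero]

noncomputable def fc (M k : ℕ) : ℝ :=
  if k ≤ M then 2^k * ((2*M).factorial : ℝ) / ((M-k).factorial * (2*k).factorial) else 0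

noncomputable def ec (M k : ℕ) : ℝ :=
  if k ≤ M then 2^k * ((2*M+1).factorial : ℝ) / ((M-k).factorial * (2*k+1).factorial) else 0

lemma fc_top (M : ℕ) : fc M (M+1) = 0 := by simp [fc]
lemma ec_top (M : ℕ) : ec M (M+1) = 0 := by simp [ec]

lemma two_mul_x_hermite_odd (k : ℕ) (x : ℝ) :
    2 * x * hermiteH (2*k+1) x = hermiteH (2*k+2) x + 2*(2*(k:ℝ)+1) * hermiteH (2*k) x := by
  have h := two_mul_x_hermite (2*k+1) x
  rw [show 2*k+1+1 = 2*k+2 by omega, show 2*k+1-1 = 2*k by omega] at h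
  rw [h]; push_cast; ring

lemma two_mul_x_hermite_even (k : ℕ) (x : ℝ) :
    2 * x * hermiteH (2*k) x = hermiteH (2*k+1) x + 2*(2*(k:ℝ)) * hermiteH (2*k-1) x := by
  have h := two_mul_x_hermite (2*k) x
  rw [h]; push_cast; ring

lemma factorial_cast_succ (a : ℕ) : ((a+1).factorial : ℝ) = ((a:ℝ)+1) * (a.factorial : ℝ) := by
  rw [Nat.factorial_succ]; push_cast; ring

lemma coeffE (M k : ℕ) (hk : k ≤ M + 1) :
    fc (M+1) k = (if k = 0 then 0 else 2 * ec M (k-1))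
      + (4*(2*(k:ℝ)+1) * ec M k - 2*(2*(M:ℝ)+1) * fc M k) := by
  rcases Nat.lt_or_ge k (M+1) with hkM | hkM
  · -- k ≤ M
    have hkM' : k ≤ M := by omega
    rcases Nat.eq_zero_or_pos k with rfl | hk0
    · simp only [fc, ec, if_pos (Nat.zero_le _), if_pos hkM', reduceIte]
      rw [show 2*(M+1) = (2*M+1)+1 by omega, factorial_cast_succ,
        show (2*M+1) = (2*M)+1 from rfl, factorial_cast_succ,
        show M+1-0 = M+1 by omega, factorial_cast_succ, show M-0 = M by omega]
      have h1 : ((2:ℕ)*0).factorial = 1 := by norm_num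
      have h2 : ((2:ℕ)*0+1).factorial = 1 := by norm_num
      rw [h1, h2]
      have hM : ((M.factorial : ℝ)) ≠ 0 := by positivity
      push_cast
      field_simp
      ring
    · obtain ⟨j, rfl⟩ : ∃ j, k = j + 1 := ⟨k-1, by omega⟩
      simp only [fc, ec, if_pos hkM', if_pos (show j+1 ≤ M+1 by omega),
        if_pos (show j ≤ M by omega), if_neg (by omega : ¬ j+1 = 0),
        show j+1-1 = j from rfl]
      rw [show 2*(M+1) = (2*M+1)+1 by omega, factorial_cast_succ,
        show (2*M+1) = (2*M)+1 from rfl, factorial_cast_succ,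
        show M+1-(j+1) = (M-(j+1))+1 by omega, factorial_cast_succ,
        show 2*(j+1) = (2*j+1)+1 by omega, factorial_cast_succ,
        factorial_cast_succ ((2*j+1)+1), factorial_cast_succ (2*j+1),
        show (2*j+1) = (2*j)+1 from rfl, factorial_cast_succ,
        show M-j = (M-(j+1))+1 by omega, factorial_cast_succ]
      have c1 : ((M-(j+1)).factorial : ℝ) ≠ 0 := by positivity
      have c2 : (((2*j)).factorial : ℝ) ≠ 0 := by positivity
      have c3 : ((M:ℝ)-(j+1)+1) ≠ 0 := by
        have h := Nat.cast_sub (R := ℝ) (show j+1 ≤ M by omega)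
        have h0 : ((M-(j+1) : ℕ) : ℝ) ≥ 0 := Nat.cast_nonneg _
        push_cast at h h0 ⊢
        intro hc; rw [← h] at hc; linarith
      push_cast [Nat.cast_sub (show j+1 ≤ M from by omega)]
      field_simp
      ring
  · -- k = M+1
    have hk1 : k = M + 1 := by omega
    subst hk1
    rw [fc_top, ec_top, if_neg (by omega : ¬ M+1 = 0), show M+1-1 = M from rfl]
    simp only [fc, ec, if_pos (le_refl (M+1)), if_pos (le_refl M)]
    rw [show M+1-(M+1) = 0 by omega, show M-M = 0 by omega,
      show 2*(M+1) = (2*M+1)+1 by omega, factorial_cast_succ]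
    have hfac : (((2*M+1).factorial : ℝ)) ≠ 0 := by positivity
    simp only [Nat.factorial_zero]
    push_cast
    field_simp
    ring

lemma coeffO (M k : ℕ) (hk : k ≤ M + 1) :
    ec (M+1) k = fc (M+1) k + 4*((k:ℝ)+1) * fc (M+1) (k+1) - 2*(2*(M:ℝ)+2) * ec M k := by
  rcases Nat.lt_or_ge k (M+1) with hkM | hkM
  · have hkM' : k ≤ M := by omega
    simp only [fc, ec, if_pos (show k ≤ M+1 by omega), if_pos (show k+1 ≤ M+1 by omega),
      if_pos hkM']
    rw [show 2*(M+1)+1 = ((2*M)+1+1)+1 by omega, show 2*(M+1) = ((2*M)+1)+1 by omega,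
      show M+1-k = (M-k)+1 by omega, show M+1-(k+1) = M-k by omega,
      show 2*(k+1) = ((2*k)+1)+1 by omega, show 2*M+1 = (2*M)+1 from rfl,
      show 2*k+1 = (2*k)+1 from rfl]
    simp only [factorial_cast_succ]
    have c1 : ((M-k).factorial : ℝ) ≠ 0 := by positivity
    have c2 : (((2*k)).factorial : ℝ) ≠ 0 := by positivity
    have c3 : ((M:ℝ)-k+1) ≠ 0 := by
      have h := Nat.cast_sub (R := ℝ) hkM'
      have h0 : ((M-k : ℕ) : ℝ) ≥ 0 := Nat.cast_nonneg _
      push_cast at h h0 ⊢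
      intro hc; rw [← h] at hc; linarith
    push_cast [Nat.cast_sub hkM']
    field_simp
    ring
  · have hk1 : k = M + 1 := by omega
    subst hk1
    rw [fc_top (M+1), ec_top M]
    simp only [fc, ec, if_pos (le_refl (M+1))]
    rw [show M+1-(M+1) = 0 by omega]
    simp only [Nat.factorial_zero]
    have h1 : (((2*(M+1)+1).factorial : ℝ)) ≠ 0 := by positivity
    have h2 : (((2*(M+1)).factorial : ℝ)) ≠ 0 := by positivity
    push_cast
    field_simp
    ring

lemma hermite_mult (M : ℕ) :
    (∀ x : ℝ, hermiteH (2*M) (Real.sqrt 2 * x)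
      = ∑ k ∈ Finset.range (M+1), fc M k * hermiteH (2*k) x)
  ∧ (∀ x : ℝ, hermiteH (2*M+1) (Real.sqrt 2 * x)
      = Real.sqrt 2 * ∑ k ∈ Finset.range (M+1), ec M k * hermiteH (2*k+1) x) := by
  have hs2 : Real.sqrt 2 * Real.sqrt 2 = 2 := Real.mul_self_sqrt (by norm_num)
  induction M with
  | zero =>
    constructor
    · intro x; simp [hermiteH_zero, fc]
    · intro x; simp [hermiteH_one, ec]; ring
  | succ M ih =>
    obtain ⟨hE, hO⟩ := ih
    have hE' : ∀ x : ℝ, hermiteH (2*(M+1)) (Real.sqrt 2 * x)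
        = ∑ k ∈ Finset.range (M+2), fc (M+1) k * hermiteH (2*k) x := by
      intro x
      rw [show 2*(M+1) = 2*M+2 by omega, hermiteH_add_two, hO x, hE x]
      calc 2 * (Real.sqrt 2 * x) *
            (Real.sqrt 2 * ∑ k ∈ Finset.range (M+1), ec M k * hermiteH (2*k+1) x)
            - 2 * ((2*M : ℕ) + 1) * ∑ k ∈ Finset.range (M+1), fc M k * hermiteH (2*k) x
          = ∑ k ∈ Finset.range (M+1), (2 * ec M k * hermiteH (2*k+2) x
              + (4*(2*(k:ℝ)+1) * ec M k - 2*(2*(M:ℝ)+1) * fc M k) * hermiteH (2*k) x) := by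
            rw [Finset.mul_sum, Finset.mul_sum, Finset.mul_sum, ← Finset.sum_sub_distrib]
            refine Finset.sum_congr rfl fun k _ => ?_
            have h := two_mul_x_hermite_odd k x
            push_cast
            linear_combination (ec M k * hermiteH (2*k+1) x * 2 * x) * hs2 + (2 * ec M k) * h
        _ = (∑ k ∈ Finset.range (M+1), 2 * ec M k * hermiteH (2*k+2) x)
            + ∑ k ∈ Finset.range (M+1),
                (4*(2*(k:ℝ)+1) * ec M k - 2*(2*(M:ℝ)+1) * fc M k) * hermiteH (2*k) x := by
            rw [Finset.sum_add_distrib]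
        _ = (∑ k ∈ Finset.range (M+2), (if k = 0 then 0 else 2 * ec M (k-1)) * hermiteH (2*k) x)
            + ∑ k ∈ Finset.range (M+2),
                (4*(2*(k:ℝ)+1) * ec M k - 2*(2*(M:ℝ)+1) * fc M k) * hermiteH (2*k) x := by
            congr 1
            · rw [Finset.sum_range_succ'
                (f := fun k => (if k = 0 then 0 else 2 * ec M (k-1)) * hermiteH (2*k) x)
                (n := M+1)]
              rw [if_pos (rfl : (0:ℕ) = 0), zero_mul, add_zero]
              refine Finset.sum_congr rfl fun k _ => ?_
              rw [if_neg (by omega : ¬ k+1 = 0), Nat.add_sub_cancel,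
                show 2*(k+1) = 2*k+2 by omega]
            · rw [Finset.sum_range_succ
                (f := fun k => (4*(2*(k:ℝ)+1) * ec M k - 2*(2*(M:ℝ)+1) * fc M k)
                  * hermiteH (2*k) x) (n := M+1), ec_top, fc_top]
              push_cast
              ring
        _ = ∑ k ∈ Finset.range (M+2), fc (M+1) k * hermiteH (2*k) x := by
            rw [← Finset.sum_add_distrib]
            refine Finset.sum_congr rfl fun k hk => ?_
            rw [coeffE M k (by simpa using Nat.lt_succ_iff.mp (Finset.mem_range.mp hk))]
            ring
    refine ⟨hE', ?_⟩
    intro x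
    rw [show 2*(M+1)+1 = (2*M+1)+2 by omega, hermiteH_add_two,
      show 2*M+1+1 = 2*(M+1) by omega, hE' x, hO x]
    calc 2 * (Real.sqrt 2 * x) * ∑ k ∈ Finset.range (M+2), fc (M+1) k * hermiteH (2*k) x
          - 2 * ((2*M+1 : ℕ) + 1) *
            (Real.sqrt 2 * ∑ k ∈ Finset.range (M+1), ec M k * hermiteH (2*k+1) x)
        = (∑ k ∈ Finset.range (M+2), (Real.sqrt 2 * fc (M+1) k * hermiteH (2*k+1) x
            + Real.sqrt 2 * (4*(k:ℝ)) * fc (M+1) k * hermiteH (2*k-1) x))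
          - ∑ k ∈ Finset.range (M+1),
              2*(2*(M:ℝ)+2) * Real.sqrt 2 * (ec M k * hermiteH (2*k+1) x) := by
          congr 1
          · rw [Finset.mul_sum]
            refine Finset.sum_congr rfl fun k _ => ?_
            have h := two_mul_x_hermite_even k x
            linear_combination (Real.sqrt 2 * fc (M+1) k) * h
          · rw [Finset.mul_sum, Finset.mul_sum]
            refine Finset.sum_congr rfl fun k _ => ?_
            push_cast
            ring
      _ = (∑ k ∈ Finset.range (M+2), Real.sqrt 2 * fc (M+1) k * hermiteH (2*k+1) x)
          + (∑ k ∈ Finset.range (M+2),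
              Real.sqrt 2 * (4*((k:ℝ)+1)) * fc (M+1) (k+1) * hermiteH (2*k+1) x)
          - ∑ k ∈ Finset.range (M+2),
              2*(2*(M:ℝ)+2) * Real.sqrt 2 * (ec M k * hermiteH (2*k+1) x) := by
          rw [Finset.sum_add_distrib]
          congr 1
          · congr 1
            rw [Finset.sum_range_succ'
              (f := fun k => Real.sqrt 2 * (4*(k:ℝ)) * fc (M+1) k * hermiteH (2*k-1) x)
              (n := M+1)]
            simp only [Nat.cast_zero, mul_zero, zero_mul, add_zero]
            rw [Finset.sum_range_succ
              (f := fun k => Real.sqrt 2 * (4*((k:ℝ)+1)) * fc (M+1) (k+1)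
                * hermiteH (2*k+1) x) (n := M+1), fc_top (M+1)]
            simp only [mul_zero, zero_mul, add_zero]
            refine Finset.sum_congr rfl fun k _ => ?_
            have h1 : 2*(k+1)-1 = 2*k+1 := by omega
            rw [h1]
            push_cast
            ring
          · rw [Finset.sum_range_succ
                (f := fun k => 2*(2*(M:ℝ)+2) * Real.sqrt 2 * (ec M k * hermiteH (2*k+1) x))
                (n := M+1), ec_top]
            simp
      _ = Real.sqrt 2 * ∑ k ∈ Finset.range (M+2), ec (M+1) k * hermiteH (2*k+1) x := by
          rw [Finset.mul_sum, ← Finset.sum_add_distrib, ← Finset.sum_sub_distrib]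
          refine Finset.sum_congr rfl fun k hk => ?_
          rw [coeffO M k (by simpa using Nat.lt_succ_iff.mp (Finset.mem_range.mp hk))]
          ring

/-- the core integrals -/
noncomputable def Ig (m n : ℕ) : ℝ := ∫ u : ℝ, Real.exp (-2*u^2) * hermiteH m u * hermiteH n u

lemma integrable_of_poly_gauss1 (P : Polynomial ℝ) (f : ℝ → ℝ)
    (hf : ∀ x, f x = P.eval x * Real.exp (-x^2)) : Integrable f :=
  integrable_of_poly_gauss one_pos P f (by intro x; rw [hf x]; norm_num)

lemma integrable_Ig (m n : ℕ) :
    Integrable fun u : ℝ => Real.exp (-2*u^2) * hermiteH m u * hermiteH n u := by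
  refine integrable_of_poly_gauss (b := 2) two_pos (HP m * HP n) _ fun x => ?_
  simp [HP_eval]; ring

lemma ortho2 (p n : ℕ) (hpn : p < n) :
    ∫ u : ℝ, Real.exp (-2*u^2) * hermiteH p u * hermiteH n (Real.sqrt 2 * u) = 0 := by
  have hs2 : (0:ℝ) < Real.sqrt 2 := Real.sqrt_pos.mpr (by norm_num)
  set g : ℝ → ℝ := fun w => Real.exp (-w^2) * (hermiteH p (w / Real.sqrt 2) * hermiteH n w)
    with hg
  have hcomp : ∀ u : ℝ, Real.exp (-2*u^2) * hermiteH p u * hermiteH n (Real.sqrt 2 * u)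
      = g (Real.sqrt 2 * u) := by
    intro u
    rw [hg]
    have h1 : Real.sqrt 2 * u / Real.sqrt 2 = u := by field_simp
    have h2 : -(Real.sqrt 2 * u)^2 = -2*u^2 := by
      rw [mul_pow, Real.sq_sqrt (by norm_num : (0:ℝ) ≤ 2)]; ring
    simp only [h1, h2]
    ring
  have hgzero : ∫ w : ℝ, g w = 0 := by
    have hgexp : g = fun w => ∑ j ∈ Finset.range (p+1),
        ((HP p).coeff j * ((Real.sqrt 2)^j)⁻¹) * (w^j * (Real.exp (-w^2) * hermiteH n w)) := by
      funext w
      show Real.exp (-w^2) * (hermiteH p (w / Real.sqrt 2) * hermiteH n w) = _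
      rw [show hermiteH p (w / Real.sqrt 2) = (HP p).eval (w / Real.sqrt 2) from
        (HP_eval p _).symm]
      rw [Polynomial.eval_eq_sum_range' (lt_of_le_of_lt (HP_natDegree_le p) (Nat.lt_succ_self p))]
      rw [Finset.sum_mul, Finset.mul_sum]
      refine Finset.sum_congr rfl fun j _ => ?_
      rw [div_pow]
      field_simp
    rw [hgexp, integral_finset_sum]
    · refine Finset.sum_eq_zero fun j hj => ?_
      have hj' : j < n := lt_of_le_of_lt (Nat.lt_succ_iff.mp (Finset.mem_range.mp hj)) hpn
      rw [integral_const_mul, ortho n j hj', mul_zero]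
    · intro j _
      refine ((integrable_of_poly_gauss1 (Polynomial.X ^ j * HP n) _ fun x => ?_).const_mul _)
      simp [HP_eval]; ring
  calc ∫ u : ℝ, Real.exp (-2*u^2) * hermiteH p u * hermiteH n (Real.sqrt 2 * u)
      = ∫ u : ℝ, g (Real.sqrt 2 * u) := by congr 1; funext u; exact hcomp u
    _ = |(Real.sqrt 2)⁻¹| • ∫ w : ℝ, g w := MeasureTheory.Measure.integral_comp_mul_left g _
    _ = 0 := by rw [hgzero, smul_zero]

/-- normalization constants -/
noncomputable def Kc (m : ℕ) : ℝ :=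
  ((2:ℝ) ^ m * (m.factorial : ℝ) * Real.sqrt π) ^ (-(1:ℝ)/2)

lemma Kc_pos (m : ℕ) : 0 < Kc m := by
  apply Real.rpow_pos_of_pos
  have : (0:ℝ) < Real.sqrt π := Real.sqrt_pos.mpr Real.pi_pos
  positivity

lemma gramA_eq {T : ℝ} (hT : 0 < T) (m n : ℕ) :
    gramA T m n = (T ^ (-(1:ℝ)/2))^2 * Real.sqrt T * (Kc m * Kc n) * Ig m n := by
  have hsT : (0:ℝ) < Real.sqrt T := Real.sqrt_pos.mpr hT
  have key : (fun v => psi T m v * psi T n v)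
      = fun v => ((T ^ (-(1:ℝ)/2))^2 * (Kc m * Kc n)) *
          ((fun u => Real.exp (-2*u^2) * hermiteH m u * hermiteH n u) (v / Real.sqrt T)) := by
    funext v
    have h2 : Real.exp (-v^2/T) * Real.exp (-v^2/T) = Real.exp (-2*(v/Real.sqrt T)^2) := by
      rw [← Real.exp_add]; congr 1
      rw [div_pow, Real.sq_sqrt hT.le]; ring
    have expand : psi T m v * psi T n v
        = (Real.exp (-v^2/T) * Real.exp (-v^2/T)) * ((T ^ (-(1:ℝ)/2))^2 * (Kc m * Kc n))
          * (hermiteH m (v/Real.sqrt T) * hermiteH n (v/Real.sqrt T)) := by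
      simp only [psi, Kc]; ring
    rw [expand, h2]
    ring
  rw [gramA, key, MeasureTheory.integral_const_mul,
    MeasureTheory.Measure.integral_comp_div
      (fun u => Real.exp (-2*u^2) * hermiteH m u * hermiteH n u) (Real.sqrt T)]
  rw [abs_of_pos hsT, smul_eq_mul, ← Ig]
  ring

lemma sum_range_odd_even (f : ℕ → ℝ) (m : ℕ) :
    ∑ j ∈ Finset.range (2*m+1), f j
      = (∑ k ∈ Finset.range (m+1), f (2*k)) + ∑ k ∈ Finset.range m, f (2*k+1) := by
  induction m with
  | zero => simp
  | succ m ih =>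
    rw [show 2*(m+1)+1 = (2*m+1)+1+1 by omega, Finset.sum_range_succ, Finset.sum_range_succ, ih,
      Finset.sum_range_succ (f := fun k => f (2*k)) (n := m+1),
      Finset.sum_range_succ (f := fun k => f (2*k+1)) (n := m),
      show 2*(m+1) = 2*m+1+1 by omega]
    ring

lemma ec_self (M : ℕ) : ec M M = 2^M := by
  simp only [ec, if_pos (le_refl M), Nat.sub_self, Nat.factorial_zero]
  have : (((2*M+1).factorial : ℝ)) ≠ 0 := by positivity
  field_simp
  simp

lemma rpow_neg_half {x : ℝ} (hx : 0 < x) : x ^ (-(1:ℝ)/2) = (Real.sqrt x)⁻¹ := by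
  rw [show (-(1:ℝ)/2) = -(1/2) by ring, Real.rpow_neg hx.le, Real.sqrt_eq_rpow]

lemma sqrt_two_pow_odd (k : ℕ) : Real.sqrt ((2:ℝ)^(2*k+1)) = 2^k * Real.sqrt 2 := by
  have h : ((2:ℝ)^(2*k+1)) = ((2:ℝ)^k)^2 * 2 := by
    rw [← pow_mul]; ring
  rw [h, Real.sqrt_mul (by positivity), Real.sqrt_sq (by positivity)]

lemma scalarK (M k : ℕ) (hkM : k < M) :
    Kc (2*k+1) * (-Real.sqrt (((2*M+1).factorial : ℝ) / ((2*k+1).factorial : ℝ)) /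
        ((4:ℝ)^(M-k) * ((M-k).factorial : ℝ)))
      = -(Kc (2*M+1) / 2^M) * ec M k := by
  obtain ⟨j, rfl⟩ : ∃ j, M = k + (j+1) := ⟨M - k - 1, by omega⟩
  have hsπ : (0:ℝ) < Real.sqrt π := Real.sqrt_pos.mpr Real.pi_pos
  have hfM : (0:ℝ) < ((2*(k+(j+1))+1).factorial : ℝ) := by positivity
  have hfk : (0:ℝ) < ((2*k+1).factorial : ℝ) := by positivity
  set a := Real.sqrt ((2*(k+(j+1))+1).factorial : ℝ) with ha
  set b := Real.sqrt ((2*k+1).factorial : ℝ) with hb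
  set q := Real.sqrt (Real.sqrt π) with hq
  have hA : a^2 = ((2*(k+(j+1))+1).factorial : ℝ) := Real.sq_sqrt hfM.le
  have hB : b^2 = ((2*k+1).factorial : ℝ) := Real.sq_sqrt hfk.le
  have hapos : 0 < a := Real.sqrt_pos.mpr hfM
  have hbpos : 0 < b := Real.sqrt_pos.mpr hfk
  have hqpos : 0 < q := Real.sqrt_pos.mpr hsπ
  have hKk : Kc (2*k+1) = (2^k * Real.sqrt 2 * b * q)⁻¹ := by
    rw [Kc, rpow_neg_half (by positivity),
      Real.sqrt_mul (by positivity), Real.sqrt_mul (by positivity), sqrt_two_pow_odd, ← hb, ← hq]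
  have hKM : Kc (2*(k+(j+1))+1) = (2^(k+(j+1)) * Real.sqrt 2 * a * q)⁻¹ := by
    rw [Kc, rpow_neg_half (by positivity),
      Real.sqrt_mul (by positivity), Real.sqrt_mul (by positivity), sqrt_two_pow_odd, ← ha, ← hq]
  have hzsqrt : Real.sqrt (((2*(k+(j+1))+1).factorial : ℝ) / ((2*k+1).factorial : ℝ)) = a / b := by
    rw [Real.sqrt_div hfM.le, ← ha, ← hb]
  have hsub : k + (j+1) - k = j+1 := by omega
  rw [hKk, hKM, hzsqrt, hsub]
  simp only [ec, if_pos (show k ≤ k + (j+1) by omega), hsub]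
  rw [← hA, ← hB]
  have h4 : ((4:ℝ))^(j+1) = 2^(j+1) * 2^(j+1) := by
    rw [show (4:ℝ) = 2*2 by norm_num, mul_pow]
  have h2M : ((2:ℝ))^(k+(j+1)) = 2^k * 2^(j+1) := by rw [pow_add]
  have hfj : (0:ℝ) < (((j+1)).factorial : ℝ) := by positivity
  have hs2 : (0:ℝ) < Real.sqrt 2 := Real.sqrt_pos.mpr (by norm_num)
  rw [h4, h2M]
  field_simp

theorem gramA_linear_system_even (T : ℝ) (hT : 0 < T) (M : ℕ) (hM : 1 ≤ M)
    (z : ℕ → ℝ)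
    (hzeven : ∀ k ≤ M, z (2 * k) = 0)
    (hzodd : ∀ k < M, z (2 * k + 1) =
      -Real.sqrt ((Nat.factorial (2 * M + 1) : ℝ) / (Nat.factorial (2 * k + 1) : ℝ)) /
        ((4 : ℝ) ^ (M - k) * (Nat.factorial (M - k) : ℝ)))
    (p : ℕ) (hp : p ≤ 2 * M) :
    ∑ j ∈ Finset.range (2 * M + 1), gramA T p j * z j = gramA T p (2 * M + 1) := by
  have hp1 : p < 2*M+1 := by omega
  have hmult := (hermite_mult M).2
  have horthfull : ∑ k ∈ Finset.range (M+1), ec M k * Ig p (2*k+1) = 0 := by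
    have h0 := ortho2 p (2*M+1) hp1
    have h1 : (fun u : ℝ => Real.exp (-2*u^2) * hermiteH p u * hermiteH (2*M+1) (Real.sqrt 2 * u))
        = fun u => ∑ k ∈ Finset.range (M+1),
            Real.sqrt 2 * ec M k * (Real.exp (-2*u^2) * hermiteH p u * hermiteH (2*k+1) u) := by
      funext u
      rw [hmult u, Finset.mul_sum, Finset.mul_sum]
      refine Finset.sum_congr rfl fun k _ => ?_
      ring
    rw [h1, MeasureTheory.integral_finset_sum _
      (fun k _ => (integrable_Ig p (2*k+1)).const_mul _)] at h0
    have h2 : ∀ k ∈ Finset.range (M+1),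
        (∫ u : ℝ, Real.sqrt 2 * ec M k *
            (Real.exp (-2*u^2) * hermiteH p u * hermiteH (2*k+1) u))
          = Real.sqrt 2 * (ec M k * Ig p (2*k+1)) := by
      intro k _
      rw [MeasureTheory.integral_const_mul, Ig]
      ring
    rw [Finset.sum_congr rfl h2, ← Finset.mul_sum] at h0
    rcases mul_eq_zero.mp h0 with h | h
    · exact absurd h (by positivity)
    · exact h
  have hIg : ∑ k ∈ Finset.range M, ec M k * Ig p (2*k+1) = -(2^M * Ig p (2*M+1)) := by
    rw [Finset.sum_range_succ, ec_self] at horthfull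
    linarith [horthfull]
  have hKcsum : ∑ j ∈ Finset.range (2*M+1), Kc j * z j * Ig p j
      = Kc (2*M+1) * Ig p (2*M+1) := by
    rw [sum_range_odd_even (fun j => Kc j * z j * Ig p j) M]
    have heven : ∑ k ∈ Finset.range (M+1), Kc (2*k) * z (2*k) * Ig p (2*k) = 0 :=
      Finset.sum_eq_zero fun k hk => by
        rw [hzeven k (Nat.lt_succ_iff.mp (Finset.mem_range.mp hk))]; ring
    have hodd : ∑ k ∈ Finset.range M, Kc (2*k+1) * z (2*k+1) * Ig p (2*k+1)
        = -(Kc (2*M+1) / 2^M) * ∑ k ∈ Finset.range M, ec M k * Ig p (2*k+1) := by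
      rw [Finset.mul_sum]
      refine Finset.sum_congr rfl fun k hk => ?_
      have hkM := Finset.mem_range.mp hk
      rw [hzodd k hkM, scalarK M k hkM]
      ring
    rw [heven, hodd, hIg, zero_add]
    have h2M : ((2:ℝ)^M) ≠ 0 := by positivity
    field_simp
  calc ∑ j ∈ Finset.range (2*M+1), gramA T p j * z j
      = ∑ j ∈ Finset.range (2*M+1),
          ((T ^ (-(1:ℝ)/2))^2 * Real.sqrt T * Kc p) * (Kc j * z j * Ig p j) := by
        refine Finset.sum_congr rfl fun j _ => ?_
        rw [gramA_eq hT p j]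
        ring
    _ = ((T ^ (-(1:ℝ)/2))^2 * Real.sqrt T * Kc p)
        * ∑ j ∈ Finset.range (2*M+1), Kc j * z j * Ig p j := by rw [Finset.mul_sum]
    _ = ((T ^ (-(1:ℝ)/2))^2 * Real.sqrt T * Kc p) * (Kc (2*M+1) * Ig p (2*M+1)) := by
        rw [hKcsum]
    _ = gramA T p (2*M+1) := by rw [gramA_eq hT p (2*M+1)]; ring
end

section
/- For all natural numbers M ≥ 1 and q with 0 ≤ q ≤ M−1, the following alternating binomial identity holds: ∑_{k=0}^{M−1} (−1)^{M−k+1} · C(2q+2k+2, 2q+1) · C(q+M+1, q+k+1) = C(2q+2M+2, 2q+1), where C(a,b) denotes the binomial coefficient. -/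
open Polynomial Finset

lemma core_alt (N r : ℕ) (h : r < N) :
    ∑ j ∈ Finset.range (N + 1),
      (-1 : ℤ) ^ j * (Nat.choose N j : ℤ) * (Nat.choose (2 * j) r : ℤ) = 0 := by
  have key : ((1 : ℤ[X]) - (X + 1) ^ 2) ^ N
      = ∑ j ∈ Finset.range (N + 1),
          Polynomial.C ((-1 : ℤ) ^ j * (Nat.choose N j : ℤ)) * (X + 1) ^ (2 * j) := by
    rw [sub_eq_add_neg, add_comm]
    rw [add_pow]
    refine Finset.sum_congr rfl fun j hj => ?_
    rw [one_pow, mul_one, neg_pow, ← pow_mul, map_mul, map_pow, map_neg, map_one,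
      C_eq_natCast]
    ring
  have lhs0 : (((1 : ℤ[X]) - (X + 1) ^ 2) ^ N).coeff r = 0 := by
    have e : ((1 : ℤ[X]) - (X + 1) ^ 2) = (-(X + 2)) * X := by ring
    rw [e, mul_pow, coeff_mul_X_pow']
    rw [if_neg (by omega)]
  rw [key, finset_sum_coeff] at lhs0
  rw [← lhs0]
  refine Finset.sum_congr rfl fun j hj => ?_
  rw [coeff_C_mul, coeff_X_add_one_pow]

theorem alternating_binomial_identity_odd (M q : ℕ) (hM : 1 ≤ M) (hq : q ≤ M - 1) :
    ∑ k ∈ Finset.range M,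
        (-1 : ℤ) ^ (M - k + 1) * (Nat.choose (2 * q + 2 * k + 2) (2 * q + 1) : ℤ) *
          (Nat.choose (q + M + 1) (q + k + 1) : ℤ) =
      (Nat.choose (2 * q + 2 * M + 2) (2 * q + 1) : ℤ) := by
  have hqM : q < M := by omega
  set N := q + M + 1 with hN
  have hr : 2 * q + 1 < N := by omega
  have core := core_alt N (2 * q + 1) hr
  have hsplit : N + 1 = (q + 1) + (M + 1) := by omega
  rw [hsplit, Finset.sum_range_add] at core
  have h1 : ∑ j ∈ Finset.range (q + 1),
      (-1 : ℤ) ^ j * (Nat.choose N j : ℤ) * (Nat.choose (2 * j) (2 * q + 1) : ℤ) = 0 := by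
    refine Finset.sum_eq_zero fun j hj => ?_
    rw [Finset.mem_range] at hj
    have hz : Nat.choose (2 * j) (2 * q + 1) = 0 := Nat.choose_eq_zero_of_lt (by omega)
    rw [hz]
    simp
  rw [h1, zero_add] at core
  have core2 : ∑ k ∈ Finset.range (M + 1),
      (-1 : ℤ) ^ k * (Nat.choose N (q + k + 1) : ℤ) *
        (Nat.choose (2 * q + 2 * k + 2) (2 * q + 1) : ℤ) = 0 := by
    have hc := congrArg (fun x => (-1 : ℤ) ^ (q + 1) * x) core
    simp only [mul_zero] at hc
    rw [← hc, Finset.mul_sum]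
    refine Finset.sum_congr rfl fun k hk => ?_
    rw [show q + k + 1 = q + 1 + k from by ring,
      show 2 * (q + 1 + k) = 2 * q + 2 * k + 2 from by ring, pow_add]
    have hev : (-1 : ℤ) ^ (q * 2) = 1 := by rw [mul_comm, pow_mul]; norm_num
    linear_combination (-((-1 : ℤ) ^ k * (Nat.choose N (q + 1 + k) : ℤ) *
      (Nat.choose (2 * q + 2 * k + 2) (2 * q + 1) : ℤ))) * hev
  rw [Finset.sum_range_succ, show q + M + 1 = N from rfl, Nat.choose_self] at core2
  push_cast at core2
  have core3 : ∑ k ∈ Finset.range M,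
      (-1 : ℤ) ^ k * (Nat.choose N (q + k + 1) : ℤ) *
        (Nat.choose (2 * q + 2 * k + 2) (2 * q + 1) : ℤ)
      = -((-1 : ℤ) ^ M * (Nat.choose (2 * q + 2 * M + 2) (2 * q + 1) : ℤ)) := by
    linear_combination core2
  calc ∑ k ∈ Finset.range M,
        (-1 : ℤ) ^ (M - k + 1) * (Nat.choose (2 * q + 2 * k + 2) (2 * q + 1) : ℤ) *
          (Nat.choose (q + M + 1) (q + k + 1) : ℤ)
      = (-1 : ℤ) ^ (M + 1) * ∑ k ∈ Finset.range M,
        (-1 : ℤ) ^ k * (Nat.choose N (q + k + 1) : ℤ) *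
          (Nat.choose (2 * q + 2 * k + 2) (2 * q + 1) : ℤ) := by
        rw [Finset.mul_sum]
        refine Finset.sum_congr rfl fun k hk => ?_
        rw [Finset.mem_range] at hk
        have hsign : (-1 : ℤ) ^ (M + 1) * (-1 : ℤ) ^ k = (-1 : ℤ) ^ (M - k + 1) := by
          rw [← pow_add, show M + 1 + k = (M - k + 1) + 2 * k from by omega, pow_add,
            pow_mul]
          norm_num
        rw [← mul_assoc, ← mul_assoc, mul_comm ((-1 : ℤ) ^ (M + 1)), mul_assoc, mul_assoc]
        rw [mul_comm ((Nat.choose N (q + k + 1) : ℤ))]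
        rw [← mul_assoc, ← mul_assoc, mul_comm ((-1 : ℤ) ^ k), hsign, hN]
    _ = (Nat.choose (2 * q + 2 * M + 2) (2 * q + 1) : ℤ) := by
        rw [core3]
        have hsq : ((-1 : ℤ) ^ M) * ((-1 : ℤ) ^ M) = 1 := by
          rw [← pow_add, ← two_mul, pow_mul]; norm_num
        linear_combination (Nat.choose (2 * q + 2 * M + 2) (2 * q + 1) : ℤ) * hsq
end

section
/- For all natural numbers M ≥ 1 and q with 0 ≤ q ≤ M−1, the following alternating binomial identity holds: ∑_{k=0}^{M−1} (−1)^{M−k+1} · C(2q+2k, 2q) · C(q+M, q+k) = C(2q+2M, 2q), where C(a,b) denotes the binomial coefficient. -/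
open Finset

/-- Pascal reduction for alternating binomial sums: an `(n+1)`-st finite
difference is an `n`-th finite difference of the first difference. -/
lemma pascal_reduce (n : ℕ) (f : ℕ → ℤ) :
    ∑ i ∈ range (n+2), (-1:ℤ)^i * ((n+1).choose i) * f i
      = ∑ i ∈ range (n+1), (-1:ℤ)^i * (n.choose i) * (f i - f (i+1)) := by
  have h0 : ∑ i ∈ range (n+2), (-1:ℤ)^i * ((n+1).choose i) * f i
      = (∑ i ∈ range (n+1), (-1:ℤ)^(i+1) * ((n+1).choose (i+1)) * f (i+1))
        + f 0 := by
    rw [Finset.sum_range_succ' (fun i => (-1:ℤ)^i * ((n+1).choose i) * f i) (n+1)]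
    simp
  have h1 : ∀ i : ℕ, (((n+1).choose (i+1) : ℤ)) = n.choose i + n.choose (i+1) := by
    intro i
    rw [Nat.choose_succ_succ]
    push_cast
    ring
  have h2 : ∑ i ∈ range (n+1), (-1:ℤ)^(i+1) * (n.choose (i+1)) * f (i+1)
      = (∑ i ∈ range (n+1), (-1:ℤ)^i * (n.choose i) * f i) - f 0 := by
    have := Finset.sum_range_succ' (fun i => (-1:ℤ)^i * (n.choose i) * f i) (n+1)
    have hlast : ∑ i ∈ range (n+2), (-1:ℤ)^i * (n.choose i) * f i
        = ∑ i ∈ range (n+1), (-1:ℤ)^i * (n.choose i) * f i := by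
      rw [Finset.sum_range_succ]
      simp [Nat.choose_eq_zero_of_lt (Nat.lt_succ_self n)]
    rw [hlast] at this
    simp only [pow_zero, Nat.choose_zero_right, Nat.cast_one, one_mul, mul_one] at this
    linarith [this]
  rw [h0]
  have : ∑ i ∈ range (n+1), (-1:ℤ)^(i+1) * ((n+1).choose (i+1)) * f (i+1)
      = (∑ i ∈ range (n+1), (-1:ℤ)^(i+1) * (n.choose i) * f (i+1))
        + ∑ i ∈ range (n+1), (-1:ℤ)^(i+1) * (n.choose (i+1)) * f (i+1) := by
    rw [← Finset.sum_add_distrib]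
    apply Finset.sum_congr rfl
    intro i _
    rw [h1 i]
    ring
  rw [this, h2]
  have hsum : (∑ i ∈ range (n+1), (-1:ℤ)^(i+1) * (n.choose i) * f (i+1))
      + ∑ i ∈ range (n+1), (-1:ℤ)^i * (n.choose i) * f i
      = ∑ i ∈ range (n+1), (-1:ℤ)^i * (n.choose i) * (f i - f (i+1)) := by
    rw [← Finset.sum_add_distrib]
    exact Finset.sum_congr rfl fun i _ => by ring
  linarith [hsum]

/-- Key lemma: the `n`-th alternating binomial sum of `C(2i+s, r)` vanishes
whenever `r < n` (since it's a polynomial of degree `r` in `i`). -/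
lemma alt_sum_choose_shift : ∀ n r s : ℕ, r < n →
    ∑ i ∈ range (n+1), (-1:ℤ)^i * (n.choose i) * ((2*i + s).choose r) = 0 := by
  intro n
  induction n with
  | zero => intro r s h; omega
  | succ n ih =>
    intro r s h
    rcases Nat.eq_zero_or_pos r with rfl | hr
    · have : ∑ i ∈ range (n+2), (-1:ℤ)^i * ((n+1).choose i) * ((2*i + s).choose 0)
          = ∑ i ∈ range (n+2), (-1:ℤ)^i * ((n+1).choose i) := by
        apply Finset.sum_congr rfl; intro i _; simp
      rw [this, Int.alternating_sum_range_choose_of_ne (by omega : n + 1 ≠ 0)]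
    · have hr' : r - 1 < n := by omega
      rw [show n + 1 + 1 = n + 2 by rfl, pascal_reduce n (fun i => (((2*i + s).choose r : ℕ) : ℤ))]
      have hdiff : ∀ i : ℕ,
          (((2*i + s).choose r : ℕ) : ℤ) - (((2*(i+1) + s).choose r : ℕ) : ℤ)
            = -((((2*i + (s+1)).choose (r-1) : ℕ) : ℤ) + (((2*i + s).choose (r-1) : ℕ) : ℤ)) := by
        intro i
        have e2 : r - 1 + 1 = r := by omega
        have ha : (2*i + s + 1 + 1).choose r
            = (2*i + s + 1).choose (r-1) + (2*i + s + 1).choose r := by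
          conv_lhs => rw [← e2]
          rw [Nat.choose_succ_succ, Nat.succ_eq_add_one, e2]
        have hb : (2*i + s + 1).choose r
            = (2*i + s).choose (r-1) + (2*i + s).choose r := by
          conv_lhs => rw [← e2]
          rw [Nat.choose_succ_succ, Nat.succ_eq_add_one, e2]
        have e1 : 2*(i+1) + s = 2*i + s + 1 + 1 := by ring
        have e3 : 2*i + (s+1) = 2*i + s + 1 := by ring
        rw [e1, e3, ha, hb]
        push_cast
        ring
      have : ∑ i ∈ range (n+1), (-1:ℤ)^i * (n.choose i) *
          ((((2*i + s).choose r : ℕ) : ℤ) - (((2*(i+1) + s).choose r : ℕ) : ℤ))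
          = -(∑ i ∈ range (n+1), (-1:ℤ)^i * (n.choose i) * (((2*i + (s+1)).choose (r-1) : ℕ) : ℤ))
            - ∑ i ∈ range (n+1), (-1:ℤ)^i * (n.choose i) * (((2*i + s).choose (r-1) : ℕ) : ℤ) := by
        rw [← Finset.sum_neg_distrib, ← Finset.sum_sub_distrib]
        apply Finset.sum_congr rfl
        intro i _
        rw [hdiff i]
        ring
      rw [this, ih (r-1) (s+1) hr', ih (r-1) s hr']
      ring

theorem alternating_binomial_identity_even (M q : ℕ) (hM : 1 ≤ M) (hq : q ≤ M - 1) :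
    ∑ k ∈ Finset.range M,
        (-1 : ℤ) ^ (M - k + 1) * (Nat.choose (2 * q + 2 * k) (2 * q) : ℤ) *
          (Nat.choose (q + M) (q + k) : ℤ) =
      (Nat.choose (2 * q + 2 * M) (2 * q) : ℤ) := by
  have hqM : 2*q < q + M := by omega
  have key := alt_sum_choose_shift (q+M) (2*q) 0 hqM
  -- split range (q+M+1) at q
  rw [Finset.range_eq_Ico, ← Finset.sum_Ico_consecutive _ (Nat.zero_le q)
      (by omega : q ≤ q + M + 1)] at key
  have h1 : ∑ i ∈ Finset.Ico 0 q, (-1:ℤ)^i * ((q+M).choose i) * ((2*i + 0).choose (2*q)) = 0 := by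
    apply Finset.sum_eq_zero
    intro i hi
    have hi' : i < q := (Finset.mem_Ico.mp hi).2
    have h0 : (2*i).choose (2*q) = 0 := Nat.choose_eq_zero_of_lt (by omega)
    simp [h0]
  rw [h1, zero_add, Finset.sum_Ico_eq_sum_range] at key
  have hM1 : q + M + 1 - q = M + 1 := by omega
  rw [hM1] at key
  -- key : ∑ k ∈ range (M+1), (-1)^(q+k) * C(q+M, q+k) * C(2(q+k)+0, 2q) = 0
  have key2 : ∑ k ∈ range (M+1),
      (-1 : ℤ) ^ (M - k + 1) * ((2 * q + 2 * k).choose (2 * q) : ℤ) *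
        ((q + M).choose (q + k) : ℤ) = 0 := by
    have := congrArg (fun x : ℤ => (-1:ℤ)^(q+M+1) * x) key
    simp only [mul_zero] at this
    rw [Finset.mul_sum] at this
    rw [← this]
    apply Finset.sum_congr rfl
    intro k hk
    have hk' : k ≤ M := by
      have := Finset.mem_range.mp hk; omega
    have harg : 2*(q+k) + 0 = 2*q + 2*k := by ring
    rw [harg]
    have hsign : (-1:ℤ)^(q+M+1) * (-1:ℤ)^(q+k) = (-1:ℤ)^(M - k + 1) := by
      rw [← pow_add]
      have he : (q+M+1)+(q+k) = (M - k + 1) + 2*(q+k) := by omega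
      rw [he, pow_add, pow_mul]
      norm_num
    calc (-1 : ℤ) ^ (M - k + 1) * ((2 * q + 2 * k).choose (2 * q) : ℤ) *
        ((q + M).choose (q + k) : ℤ)
        = ((-1:ℤ)^(q+M+1) * (-1:ℤ)^(q+k)) * ((2 * q + 2 * k).choose (2 * q) : ℤ) *
          ((q + M).choose (q + k) : ℤ) := by rw [hsign]
      _ = (-1:ℤ)^(q+M+1) * ((-1:ℤ)^(q+k) * ((q + M).choose (q + k) : ℤ) *
          ((2 * q + 2 * k).choose (2 * q) : ℤ)) := by ring
  rw [Finset.sum_range_succ] at key2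
  have hlast : (-1 : ℤ) ^ (M - M + 1) * ((2 * q + 2 * M).choose (2 * q) : ℤ) *
      ((q + M).choose (q + M) : ℤ) = -((2 * q + 2 * M).choose (2 * q) : ℤ) := by
    rw [Nat.sub_self, Nat.choose_self]
    push_cast
    ring
  rw [hlast] at key2
  linarith [key2]
end

section
/- Let A and D be real (N+1)×(N+1) matrices with A symmetric, let ε > 0 be such that A + εI is invertible, and define the penalized modified matrix D̄ = (1/2)·D − (1/2)·(A + εI)^{−1}·Dᵀ·(A + εI). If U : ℝ → ℝ^{N+1} is differentiable with U'(t) = −D̄·U(t) for all t, then the penalized weighted quadratic norm ⟨U(t), A·U(t)⟩ + ε·‖U(t)‖² is constant in time. -/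
open Matrix

theorem penalized_energy_conservation (N : ℕ)
    (A D : Matrix (Fin (N + 1)) (Fin (N + 1)) ℝ) (hA : A.IsSymm)
    (ε : ℝ) (hε : 0 < ε)
    (hinv : IsUnit (A + ε • (1 : Matrix (Fin (N + 1)) (Fin (N + 1)) ℝ)))
    (Dbar : Matrix (Fin (N + 1)) (Fin (N + 1)) ℝ)
    (hDbar : Dbar = (1 / 2 : ℝ) • D -
      (1 / 2 : ℝ) • ((A + ε • 1)⁻¹ * Dᵀ * (A + ε • 1)))
    (U : ℝ → (Fin (N + 1) → ℝ))
    (hU : ∀ t : ℝ, HasDerivAt U (-(Dbar.mulVec (U t))) t) :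
    ∀ s t : ℝ,
      (U t) ⬝ᵥ (A.mulVec (U t)) + ε * ((U t) ⬝ᵥ (U t)) =
        (U s) ⬝ᵥ (A.mulVec (U s)) + ε * ((U s) ⬝ᵥ (U s)) := by
  set M : Matrix (Fin (N + 1)) (Fin (N + 1)) ℝ := A + ε • 1 with hM
  have hMsymm : Mᵀ = M := by
    rw [hM, transpose_add, transpose_smul, transpose_one, hA.eq]
  have hdet : IsUnit M.det := (Matrix.isUnit_iff_isUnit_det M).mp hinv
  have hMinv : M⁻¹ * M = 1 := Matrix.nonsing_inv_mul M hdet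
  have hMinv' : M * M⁻¹ = 1 := Matrix.mul_nonsing_inv M hdet
  have hMinvT : (M⁻¹)ᵀ = M⁻¹ := by rw [Matrix.transpose_nonsing_inv, hMsymm]
  have key : Dbarᵀ * M + M * Dbar = 0 := by
    have hDbarT : Dbarᵀ = (1 / 2 : ℝ) • Dᵀ - (1 / 2 : ℝ) • (M * D * M⁻¹) := by
      rw [hDbar]
      simp only [transpose_sub, transpose_smul, transpose_mul, hMsymm, hMinvT]
      ring_nf
      rw [transpose_transpose, Matrix.mul_assoc]
    rw [hDbarT, hDbar]
    rw [Matrix.sub_mul, Matrix.mul_sub, Matrix.smul_mul, Matrix.smul_mul,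
      Matrix.mul_smul, Matrix.mul_smul]
    have e1 : M * D * M⁻¹ * M = M * D := by
      rw [Matrix.mul_assoc, hMinv, Matrix.mul_one]
    have e2 : M * (M⁻¹ * Dᵀ * M) = Dᵀ * M := by
      rw [← Matrix.mul_assoc, ← Matrix.mul_assoc, hMinv', Matrix.one_mul]
    rw [e1, e2]
    abel
  -- energy function
  set E : ℝ → ℝ := fun t => (U t) ⬝ᵥ (M.mulVec (U t)) with hE
  have hdiff : ∀ t : ℝ, HasDerivAt E 0 t := by
    intro t
    set V : Fin (N + 1) → ℝ := -(Dbar.mulVec (U t)) with hV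
    have h1 : HasDerivAt U V t := hU t
    have h2 : HasDerivAt (fun s => M.mulVec (U s)) (M.mulVec V) t := by
      have := (LinearMap.toContinuousLinearMap
        (Matrix.mulVecLin M)).hasFDerivAt.comp_hasDerivAt t h1
      exact this
    have h3 : HasDerivAt E (V ⬝ᵥ M.mulVec (U t) + (U t) ⬝ᵥ M.mulVec V) t := by
      have hsum := HasDerivAt.fun_sum (u := Finset.univ)
        (fun i _ => ((hasDerivAt_pi.mp h1 i).mul (hasDerivAt_pi.mp h2 i)))
      convert hsum using 1
      · rfl
      · rfl
      · ext y; simp [hE, dotProduct]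
      · simp [dotProduct, Finset.sum_add_distrib, mul_comm]
    convert h3 using 1
    have e1 : V ⬝ᵥ M.mulVec (U t) = -((U t) ⬝ᵥ ((Dbarᵀ * M).mulVec (U t))) := by
      rw [hV, neg_dotProduct]
      congr 1
      rw [← Matrix.mulVec_mulVec,
        Matrix.dotProduct_mulVec (v := U t) (A := Dbarᵀ),
        Matrix.vecMul_transpose, Matrix.dotProduct_mulVec]
    have e2 : (U t) ⬝ᵥ M.mulVec V = -((U t) ⬝ᵥ ((M * Dbar).mulVec (U t))) := by
      rw [hV, Matrix.mulVec_neg, dotProduct_neg, Matrix.mulVec_mulVec]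
    rw [e1, e2, ← neg_add, ← dotProduct_add, ← Matrix.add_mulVec, key]
    simp
  have hconst : ∀ s t : ℝ, E t = E s := by
    intro s t
    exact is_const_of_deriv_eq_zero (fun x => (hdiff x).differentiableAt)
      (fun x => (hdiff x).deriv) t s
  intro s t
  have expand : ∀ r : ℝ, E r = (U r) ⬝ᵥ (A.mulVec (U r)) + ε * ((U r) ⬝ᵥ (U r)) := by
    intro r
    rw [hE]
    simp [hM, Matrix.add_mulVec, Matrix.smul_mulVec, dotProduct_add,
      dotProduct_smul, smul_eq_mul]
  rw [← expand, ← expand, hconst s t]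
end
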